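/- For the two-agent one-dimensional HK system with |x_{1,0}-x_{2,0}|=1 and for any t̄∈[0,∞), the function equal to the constant initial datum on [0,t̄] and satisfying x_1(t)-x_2(t)=e^{-2(t-t̄)}(x_{1,0}-x_{2,0}), x_1(t)+x_2(t)=x_{1,0}+x_{2,0} for t≥t̄ is a Caratheodory solution, i.e. it is absolutely continuous and satisfies ẋ_1=χ_{|x_1-x_2|<1}(x_2-x_1), ẋ_2=χ_{|x_1-x_2|<1}(x_1-x_2) for almost every t≥0. -/

import Mathlib

open Real Set MeasureTheory

private lemma hk_lip (a b : ℝ) (hab : |a - b| = 1) (tb : ℝ) (ε : ℝ) (hε : |ε| = 1) :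
    LipschitzOnWith 1 (fun t => ((a + b) + ε * Real.exp (-2 * (t - tb)) * (a - b)) / 2)
      (Ici tb) := by
  apply (convex_Ici tb).lipschitzOnWith_of_nnnorm_hasDerivWithin_le
    (f' := fun t => ε * (Real.exp (-2 * (t - tb)) * -2) * (a - b) / 2)
  · intro x hx
    have h1 : HasDerivAt (fun t : ℝ => -2 * (t - tb)) (-2) x := by
      simpa using ((hasDerivAt_id x).sub_const tb).const_mul (-2)
    have h2 := h1.exp
    have h3 := (((h2.const_mul ε).mul_const (a - b)).div_const 2).const_add ((a + b) / 2)
    have heq : (fun t => ((a + b) + ε * Real.exp (-2 * (t - tb)) * (a - b)) / 2)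
        = fun t => (a + b) / 2 + ε * Real.exp (-2 * (t - tb)) * (a - b) / 2 := by
      funext t; ring
    rw [heq]
    exact h3.hasDerivWithinAt
  · intro x hx
    rw [← NNReal.coe_le_coe, coe_nnnorm]
    have h1 : Real.exp (-2 * (x - tb)) ≤ 1 := by
      apply Real.exp_le_one_iff.2
      nlinarith [mem_Ici.1 hx]
    have h2 : (0:ℝ) < Real.exp (-2 * (x - tb)) := Real.exp_pos _
    have : |ε * (Real.exp (-2 * (x - tb)) * -2) * (a - b) / 2|
        = Real.exp (-2 * (x - tb)) := by
      rw [abs_div, abs_mul, abs_mul, hab, hε, abs_mul, abs_of_pos h2]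
      norm_num
    rw [Real.norm_eq_abs, this]
    simpa using h1

theorem stmt_1 (a b : ℝ) (hab : |a - b| = 1) (tb : ℝ) (htb : 0 ≤ tb)
    (x1 x2 : ℝ → ℝ)
    (hx1 : ∀ t, x1 t = if t ≤ tb then a
      else ((a + b) + Real.exp (-2 * (t - tb)) * (a - b)) / 2)
    (hx2 : ∀ t, x2 t = if t ≤ tb then b
      else ((a + b) - Real.exp (-2 * (t - tb)) * (a - b)) / 2) :
    (∃ C : NNReal, LipschitzWith C x1 ∧ LipschitzWith C x2) ∧
    (∀ᵐ t ∂(volume.restrict (Set.Ici (0:ℝ))),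
      HasDerivAt x1 ((if |x1 t - x2 t| < 1 then (1:ℝ) else 0) * (x2 t - x1 t)) t ∧
      HasDerivAt x2 ((if |x1 t - x2 t| < 1 then (1:ℝ) else 0) * (x1 t - x2 t)) t) := by
  constructor
  · -- Lipschitz part
    refine ⟨1, ?_, ?_⟩
    · have hmax : LipschitzWith 1 (fun t : ℝ => max t tb) := LipschitzWith.id.max_const tb
      have hf := hk_lip a b hab tb 1 (by norm_num)
      have hcomp : LipschitzOnWith (1 * 1)
          ((fun t => ((a + b) + 1 * Real.exp (-2 * (t - tb)) * (a - b)) / 2) ∘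
            (fun t : ℝ => max t tb)) univ :=
        hf.comp (lipschitzOnWith_univ.2 hmax) (fun x _ => mem_Ici.2 (le_max_right _ _))
      rw [one_mul, lipschitzOnWith_univ] at hcomp
      convert hcomp using 1
      funext t
      rw [hx1 t]
      by_cases ht : t ≤ tb
      · simp [Function.comp, ht, max_eq_right ht]
      · simp [Function.comp, max_eq_left (le_of_not_ge ht), ht]
    · have hmax : LipschitzWith 1 (fun t : ℝ => max t tb) := LipschitzWith.id.max_const tb
      have hf := hk_lip a b hab tb (-1) (by norm_num)
      have hcomp : LipschitzOnWith (1 * 1)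
          ((fun t => ((a + b) + (-1) * Real.exp (-2 * (t - tb)) * (a - b)) / 2) ∘
            (fun t : ℝ => max t tb)) univ :=
        hf.comp (lipschitzOnWith_univ.2 hmax) (fun x _ => mem_Ici.2 (le_max_right _ _))
      rw [one_mul, lipschitzOnWith_univ] at hcomp
      convert hcomp using 1
      funext t
      rw [hx2 t]
      by_cases ht : t ≤ tb
      · simp [Function.comp, ht, max_eq_right ht]
        linarith
      · simp [Function.comp, max_eq_left (le_of_not_ge ht), ht]
        ring
  · -- a.e. derivative part
    have hne : ∀ᵐ t ∂(volume.restrict (Set.Ici (0:ℝ))), t ≠ tb := by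
      apply ae_restrict_of_ae
      rw [ae_iff]
      have : {t : ℝ | ¬ t ≠ tb} = {tb} := by ext t; simp
      rw [this]
      exact measure_singleton tb
    filter_upwards [hne] with t ht
    rcases lt_or_gt_of_ne ht with hlt | hgt
    · -- t < tb : constant, derivative 0
      have hval : (if |x1 t - x2 t| < 1 then (1:ℝ) else 0) * (x2 t - x1 t) = 0 := by
        rw [hx1 t, hx2 t, if_pos hlt.le, if_pos hlt.le, hab]
        simp
      have hval2 : (if |x1 t - x2 t| < 1 then (1:ℝ) else 0) * (x1 t - x2 t) = 0 := by
        rw [hx1 t, hx2 t, if_pos hlt.le, if_pos hlt.le, hab]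
        simp
      rw [hval, hval2]
      have hmem : Iio tb ∈ nhds t := Iio_mem_nhds hlt
      constructor
      · apply (hasDerivAt_const t a).congr_of_eventuallyEq
        filter_upwards [hmem] with s hs
        rw [hx1 s, if_pos (le_of_lt hs)]
      · apply (hasDerivAt_const t b).congr_of_eventuallyEq
        filter_upwards [hmem] with s hs
        rw [hx2 s, if_pos (le_of_lt hs)]
    · -- t > tb : exponential regime
      have htb' : ¬ t ≤ tb := not_le.2 hgt
      have hE : Real.exp (-2 * (t - tb)) < 1 := by
        apply Real.exp_lt_one_iff.2
        nlinarith
      have hEpos : (0:ℝ) < Real.exp (-2 * (t - tb)) := Real.exp_pos _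
      have hdiff : x1 t - x2 t = Real.exp (-2 * (t - tb)) * (a - b) := by
        rw [hx1 t, hx2 t, if_neg htb', if_neg htb']; ring
      have habs : |x1 t - x2 t| < 1 := by
        rw [hdiff, abs_mul, hab, abs_of_pos hEpos]
        simpa using hE
      have hif : (if |x1 t - x2 t| < 1 then (1:ℝ) else 0) = 1 := if_pos habs
      have h1 : HasDerivAt (fun s : ℝ => -2 * (s - tb)) (-2) t := by
        simpa using ((hasDerivAt_id t).sub_const tb).const_mul (-2)
      have h2 := h1.exp
      have hmem : Ioi tb ∈ nhds t := Ioi_mem_nhds hgt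
      constructor
      · have h3 : HasDerivAt (fun s => ((a + b) + Real.exp (-2 * (s - tb)) * (a - b)) / 2)
            (Real.exp (-2 * (t - tb)) * -2 * (a - b) / 2) t := by
          exact ((h2.mul_const (a - b)).const_add (a + b)).div_const 2
        have h4 : HasDerivAt x1 (Real.exp (-2 * (t - tb)) * -2 * (a - b) / 2) t := by
          apply h3.congr_of_eventuallyEq
          filter_upwards [hmem] with s hs
          rw [hx1 s, if_neg (not_le.2 hs)]
        convert h4 using 1
        rw [hif, hx1 t, hx2 t, if_neg htb', if_neg htb']
        ring
      · have h3 : HasDerivAt (fun s => ((a + b) - Real.exp (-2 * (s - tb)) * (a - b)) / 2)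
            ((0 - Real.exp (-2 * (t - tb)) * -2 * (a - b)) / 2) t := by
          exact ((hasDerivAt_const t (a+b)).sub (h2.mul_const (a - b))).div_const 2
        have h4 : HasDerivAt x2 ((0 - Real.exp (-2 * (t - tb)) * -2 * (a - b)) / 2) t := by
          apply h3.congr_of_eventuallyEq
          filter_upwards [hmem] with s hs
          rw [hx2 s, if_neg (not_le.2 hs)]
        convert h4 using 1
        rw [hif, hx1 t, hx2 t, if_neg htb', if_neg htb']
        ring
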